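/- Let k be a field of characteristic ≠ 2 such that k*/(k*)² has order 2, let ℓ/k be a quadratic field extension with nontrivial k-automorphism σ, and suppose the norm map ℓ* → k*, x ↦ x·σ(x), is surjective. Let k_sq = {x² | x ∈ k} and k_sq* = {x² | x ∈ k, x ≠ 0}, and set M₁ = {m ∈ k | m² − 1 ∈ k_sq} and M₂ = {m ∈ k | m² − 1 ∉ k_sq*}. Then for all (a, b) ∈ k²: (i) if b = −a then (a, b) is not ℓ-admissible; (ii) if b = a then (a, b) is ℓ-admissible if and only if 1 − a² ∉ k_sq; (iii) if b² ≠ a², then (a, b) is ℓ-admissible if and only if (a + b)m₁ ≠ 2 + (a − b)m₂ for all (m₁, m₂) ∈ M₁ × M₂. -/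

import Mathlib

open Module Function

variable {k ℓ : Type}

/-- The function `h_{a,b} : ℓ × ℓ → ℓ` associated with a pair `(a, b) ∈ k²`. -/
def hab [Field k] [Field ℓ] [Algebra k ℓ] (σ : ℓ ≃ₐ[k] ℓ) (a b : k) (x y : ℓ) : ℓ :=
  x ^ 2 - y ^ 2 + algebraMap k ℓ a * (x * σ x) + algebraMap k ℓ b * (y * σ y)

/-- A pair `(a, b) ∈ k²` is `ℓ`-admissible if `h_{a,b}` is anisotropic. -/
def IsAdmissiblePair [Field k] [Field ℓ] [Algebra k ℓ] (σ : ℓ ≃ₐ[k] ℓ)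
    (a b : k) : Prop :=
  ∀ x y : ℓ, hab σ a b x y = 0 → x = 0 ∧ y = 0

set_option maxRecDepth 8000

section AuxPA
variable [Field k] [Field ℓ] [Algebra k ℓ]

/-- any element is an affine combination of 1 and z when z is not in k -/
lemma comb (hquad : finrank k ℓ = 2) (z : ℓ) (hz : ∀ c : k, z ≠ algebraMap k ℓ c) (v : ℓ) :
    ∃ α β : k, v = algebraMap k ℓ α + algebraMap k ℓ β * z := by
  have : Module.Finite k ℓ := FiniteDimensional.of_finrank_pos (by omega)
  have hli : ¬ LinearIndependent k ![1, z, v] := by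
    intro h
    have := h.fintype_card_le_finrank
    simp [hquad] at this
  obtain ⟨g, hg, i, hi⟩ := Fintype.not_linearIndependent_iff.mp hli
  have hg' : algebraMap k ℓ (g 0) + algebraMap k ℓ (g 1) * z + algebraMap k ℓ (g 2) * v = 0 := by
    have := hg
    simp only [Fin.sum_univ_three, Algebra.smul_def, mul_one] at this
    simpa using this
  have hinj := (algebraMap k ℓ).injective
  rcases eq_or_ne (g 2) 0 with h2 | h2
  · rcases eq_or_ne (g 1) 0 with h1 | h1
    · exfalso
      have h0 : g 0 = 0 := by
        apply hinj
        rw [h2, h1] at hg'; simpa using hg'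
      fin_cases i <;> simp_all
    · exfalso
      apply hz (-(g 0) / g 1)
      have h1' : algebraMap k ℓ (g 1) ≠ 0 := by
        simpa using fun h => h1 (hinj (by simpa using h))
      rw [map_div₀, map_neg, eq_div_iff h1']
      rw [h2] at hg'
      simp only [map_zero, zero_mul, add_zero] at hg'
      linear_combination hg'
  · have h2' : algebraMap k ℓ (g 2) ≠ 0 := by
    
      simpa using fun h => h2 (hinj (by simpa using h))
    refine ⟨-(g 0)/ g 2, -(g 1)/ g 2, ?_⟩
    rw [map_div₀, map_div₀, map_neg, map_neg]
    field_simp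
    linear_combination hg'

/-- fixed points of a nontrivial automorphism are in k -/
lemma fixed_mem (hquad : finrank k ℓ = 2) (σ : ℓ ≃ₐ[k] ℓ) (hσ : ∃ x : ℓ, σ x ≠ x)
    (z : ℓ) (hz : σ z = z) : ∃ c : k, z = algebraMap k ℓ c := by
  by_contra hc
  push_neg at hc
  obtain ⟨w, hw⟩ := hσ
  obtain ⟨α, β, hv⟩ := comb hquad z (fun c h => hc c h) w
  apply hw
  rw [hv, map_add, map_mul, σ.commutes, σ.commutes, hz]

/-- every element satisfies a monic quadratic over k -/
lemma quad_rel (hquad : finrank k ℓ = 2) (u : ℓ) :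
    ∃ c₁ c₀ : k, u ^ 2 = algebraMap k ℓ c₁ * u + algebraMap k ℓ c₀ := by
  by_cases hu : ∃ c : k, u = algebraMap k ℓ c
  · obtain ⟨c, rfl⟩ := hu
    exact ⟨2 * c, -(c ^ 2), by rw [← map_pow, ← map_mul, ← map_add]; ring_nf⟩
  · push_neg at hu
    obtain ⟨α, β, h⟩ := comb hquad u hu (u ^ 2)
    exact ⟨β, α, by rw [h]; ring⟩

/-- if σ u ≠ u then σ u = c₁ - u for the quadratic coefficient -/
lemma sigma_eq (hquad : finrank k ℓ = 2) (σ : ℓ ≃ₐ[k] ℓ) {u : ℓ} (hu : σ u ≠ u)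
    {c₁ c₀ : k} (h : u ^ 2 = algebraMap k ℓ c₁ * u + algebraMap k ℓ c₀) :
    σ u = algebraMap k ℓ c₁ - u := by
  have h2 : (σ u) ^ 2 = algebraMap k ℓ c₁ * σ u + algebraMap k ℓ c₀ := by
    have := congrArg σ h
    simpa [map_add, map_mul, map_pow, σ.commutes] using this
  have key : (σ u - u) * (σ u + u - algebraMap k ℓ c₁) = 0 := by
    linear_combination h2 - h
  rcases mul_eq_zero.mp key with h' | h'
  · exact absurd (by linear_combination h') hu
  · linear_combination h'

lemma sigma_sq (hquad : finrank k ℓ = 2) (σ : ℓ ≃ₐ[k] ℓ) (hσ : ∃ x : ℓ, σ x ≠ x)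
    (u : ℓ) : σ (σ u) = u := by
  rcases eq_or_ne (σ u) u with h | h
  · rw [h, h]
  · obtain ⟨c₁, c₀, hq⟩ := quad_rel hquad u
    have h1 : σ u = algebraMap k ℓ c₁ - u := sigma_eq hquad σ h hq
    rw [h1, map_sub, σ.commutes, h1]
    ring

/-- existence of a trace-zero element e with e² = d, d a nonsquare -/
lemma exists_e (hquad : finrank k ℓ = 2) (hchar : (2:k) ≠ 0) (σ : ℓ ≃ₐ[k] ℓ)
    (hσ : ∃ x : ℓ, σ x ≠ x) :
    ∃ (e : ℓ) (d : k), σ e = -e ∧ e ≠ 0 ∧ e ^ 2 = algebraMap k ℓ d ∧ ¬ ∃ t : k, d = t ^ 2 := by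
  obtain ⟨w, hw⟩ := hσ
  obtain ⟨c₁, c₀, hq⟩ := quad_rel hquad w
  have hs : σ w = algebraMap k ℓ c₁ - w := sigma_eq hquad σ hw hq
  have h2l : (2 : ℓ) ≠ 0 := by
    intro h
    apply hchar
    apply (algebraMap k ℓ).injective
    rw [map_ofNat, map_zero]; exact_mod_cast h
  refine ⟨w - σ w, c₁ ^ 2 + 4 * c₀, ?_, ?_, ?_, ?_⟩
  · rw [map_sub, sigma_sq hquad σ ⟨w, hw⟩]
    ring
  · exact sub_ne_zero_of_ne (Ne.symm hw)
  · rw [hs, map_add, map_pow, map_mul, map_ofNat]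
    linear_combination (4 : ℓ) * hq
  · rintro ⟨t, ht⟩
    have he2 : (w - σ w) ^ 2 = algebraMap k ℓ t ^ 2 := by
      rw [hs, ← map_pow, ← ht, map_add, map_pow, map_mul, map_ofNat]
      linear_combination (4 : ℓ) * hq
    have : (w - σ w - algebraMap k ℓ t) * (w - σ w + algebraMap k ℓ t) = 0 := by
      linear_combination he2
    have hfix : σ (w - σ w) = -(w - σ w) := by
      rw [map_sub, sigma_sq hquad σ ⟨w, hw⟩]; ring
    rcases mul_eq_zero.mp this with h' | h'
    · have he : w - σ w = algebraMap k ℓ t := by linear_combination h'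
      have := hfix
      rw [he, σ.commutes] at this
      have : (2 : ℓ) * algebraMap k ℓ t = 0 := by linear_combination this
      rcases mul_eq_zero.mp this with h2 | h2
      · exact h2l h2
      · exact sub_ne_zero_of_ne (Ne.symm hw) (by rw [he, h2])
    · have he : w - σ w = -algebraMap k ℓ t := by linear_combination h'
      have := hfix
      rw [he, map_neg, σ.commutes] at this
      have : (2 : ℓ) * algebraMap k ℓ t = 0 := by linear_combination -this
      rcases mul_eq_zero.mp this with h2 | h2
      · exact h2l h2
      · exact sub_ne_zero_of_ne (Ne.symm hw) (by rw [he, h2, neg_zero])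

/-- coordinates with respect to 1, e -/
lemma coords (hquad : finrank k ℓ = 2) (hchar : (2:k) ≠ 0) (σ : ℓ ≃ₐ[k] ℓ)
    (hσ : ∃ x : ℓ, σ x ≠ x) {e : ℓ} (he : σ e = -e) (he0 : e ≠ 0) (x : ℓ) :
    ∃ x₁ x₂ : k, x = algebraMap k ℓ x₁ + algebraMap k ℓ x₂ * e := by
  have h2l : (2 : ℓ) ≠ 0 := by
    intro h
    apply hchar
    apply (algebraMap k ℓ).injective
    rw [map_ofNat, map_zero]; exact_mod_cast h
  have hss := sigma_sq hquad σ hσ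
  obtain ⟨x₁, hx₁⟩ := fixed_mem hquad σ hσ ((x + σ x) / 2)
    (by rw [map_div₀, map_add, hss, map_ofNat]; ring_nf)
  have hd1 : (2 : ℓ) * -e ≠ 0 := mul_ne_zero h2l (neg_ne_zero.mpr he0)
  have hd2 : (2 : ℓ) * e ≠ 0 := mul_ne_zero h2l he0
  obtain ⟨x₂, hx₂⟩ := fixed_mem hquad σ hσ ((x - σ x) / (2 * e))
    (by rw [map_div₀, map_sub, map_mul, hss, he, map_ofNat, div_eq_div_iff hd1 hd2]; ring)
  refine ⟨x₁, x₂, ?_⟩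
  rw [← hx₁, ← hx₂]
  field_simp
  ring

/-- linear independence of 1 and e -/
lemma indep (hquad : finrank k ℓ = 2) (σ : ℓ ≃ₐ[k] ℓ) {e : ℓ} (he : σ e = -e) (he0 : e ≠ 0)
    (h2l : (2:ℓ) ≠ 0)
    {K E : k} (h : algebraMap k ℓ K + algebraMap k ℓ E * e = 0) : K = 0 ∧ E = 0 := by
  have hinj := (algebraMap k ℓ).injective
  rcases eq_or_ne E 0 with hE | hE
  · refine ⟨?_, hE⟩
    apply hinj
    rw [hE, map_zero, zero_mul, add_zero] at h
    simpa using h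
  · exfalso
    have hEl : algebraMap k ℓ E ≠ 0 := by
      simpa using fun hh => hE (hinj (by simpa using hh))
    have he' : e = - (algebraMap k ℓ K / algebraMap k ℓ E) := by
      field_simp
      linear_combination h
    have : σ e = e := by
      rw [he', map_neg, map_div₀, σ.commutes, σ.commutes]
    rw [he] at this
    have h2 : (2:ℓ) * e = 0 := by linear_combination -this
    rcases mul_eq_zero.mp h2 with h' | h'
    · exact h2l h'
    · exact he0 h'

/-- expansion of hab in coordinates -/
lemma hab_coords (σ : ℓ ≃ₐ[k] ℓ) {e : ℓ} (he : σ e = -e) {d : k}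
    (hd : e ^ 2 = algebraMap k ℓ d) (a b x₁ x₂ y₁ y₂ : k) :
    hab σ a b (algebraMap k ℓ x₁ + algebraMap k ℓ x₂ * e)
      (algebraMap k ℓ y₁ + algebraMap k ℓ y₂ * e) =
    algebraMap k ℓ ((1 + a) * x₁ ^ 2 + (1 - a) * d * x₂ ^ 2
        - (1 - b) * y₁ ^ 2 - (1 + b) * d * y₂ ^ 2)
      + algebraMap k ℓ (2 * (x₁ * x₂ - y₁ * y₂)) * e := by
  have hx : σ (algebraMap k ℓ x₁ + algebraMap k ℓ x₂ * e)
      = algebraMap k ℓ x₁ - algebraMap k ℓ x₂ * e := by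
    rw [map_add, map_mul, σ.commutes, σ.commutes, he]; ring
  have hy : σ (algebraMap k ℓ y₁ + algebraMap k ℓ y₂ * e)
      = algebraMap k ℓ y₁ - algebraMap k ℓ y₂ * e := by
    rw [map_add, map_mul, σ.commutes, σ.commutes, he]; ring
  rw [hab, hx, hy]
  simp only [map_add, map_sub, map_mul, map_one, map_pow, map_ofNat]
  linear_combination (algebraMap k ℓ x₂ ^ 2 - algebraMap k ℓ y₂ ^ 2
    - algebraMap k ℓ a * algebraMap k ℓ x₂ ^ 2 - algebraMap k ℓ b * algebraMap k ℓ y₂ ^ 2) * hd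

/-- product of two nonsquares is a square, from index 2 hypothesis -/
lemma nonsq_mul (hidx : ((powMonoidHom 2 : kˣ →* kˣ).range).index = 2)
    {c c' : k} (hc : ¬ ∃ t : k, c = t ^ 2) (hc' : ¬ ∃ t : k, c' = t ^ 2) :
    ∃ t : k, c * c' = t ^ 2 := by
  have hc0 : c ≠ 0 := fun h => hc ⟨0, by rw [h]; ring⟩
  have hc'0 : c' ≠ 0 := fun h => hc' ⟨0, by rw [h]; ring⟩
  set H := ((powMonoidHom 2 : kˣ →* kˣ).range)
  set cu : kˣ := Units.mk0 c hc0
  set cu' : kˣ := Units.mk0 c' hc'0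
  have hmem : ∀ (u : kˣ), u ∈ H → ∃ t : k, (u : k) = t ^ 2 := by
    rintro u ⟨v, hv⟩
    exact ⟨(v : k), by rw [← hv]; simp [powMonoidHom]⟩
  have hcu : (cu : Units k) ∉ H := fun h => hc (by simpa [cu] using hmem cu h)
  have hcu' : (cu' : Units k) ∉ H := fun h => hc' (by simpa [cu'] using hmem cu' h)
  -- quotient group has two elements
  have hcard : Nat.card (kˣ ⧸ H) = 2 := hidx
  have h1 : (QuotientGroup.mk cu : kˣ ⧸ H) ≠ 1 := by
    simpa [QuotientGroup.eq_one_iff] using hcu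
  have h1' : (QuotientGroup.mk cu' : kˣ ⧸ H) ≠ 1 := by
    simpa [QuotientGroup.eq_one_iff] using hcu'
  have heq : (QuotientGroup.mk cu : kˣ ⧸ H) = QuotientGroup.mk cu' := by
    obtain ⟨x, hx⟩ := (Nat.card_eq_two_iff' (1 : kˣ ⧸ H)).mp hcard
    rw [hx.2 _ h1, hx.2 _ h1']
  have : cu⁻¹ * cu' ∈ H := QuotientGroup.leftRel_apply.mp (Quotient.eq''.mp heq)
  obtain ⟨v, hv⟩ := this
  refine ⟨c * (v : k), ?_⟩
  have hvk : (v : k) ^ 2 = c⁻¹ * c' := by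
    have := congrArg (Units.val) hv
    simpa [powMonoidHom, pow_two, cu, cu'] using this
  rw [mul_pow, hvk]
  field_simp

section Kside
variable {k : Type} [Field k]

/-- build an (m₁, m₂) pair from h with q h not a nonzero square -/
lemma mk_pair {a b h : k} (h2 : (2:k) ≠ 0) (hab : a - b ≠ 0) (hh : h ≠ 0)
    (hq : ¬ ∃ x : k, x ≠ 0 ∧
      ((a+b)*h^2-2*(2+a-b)*h+(a+b)) * ((a+b)*h^2-2*(2-a+b)*h+(a+b)) = x ^ 2) :
    ∃ m₁ m₂ : k, (∃ x : k, m₁^2 - 1 = x^2) ∧ (¬ ∃ x : k, x ≠ 0 ∧ m₂^2-1 = x^2) ∧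
      (a+b)*m₁ = 2 + (a-b)*m₂ := by
  refine ⟨(h^2+1)/(2*h), ((a+b)*(h^2+1)-4*h)/(2*(a-b)*h),
    ⟨(h^2-1)/(2*h), by field_simp; ring⟩, ?_, by field_simp; ring⟩
  rintro ⟨x, hx0, hx⟩
  apply hq
  refine ⟨2*(a-b)*h*x, by simp [mul_ne_zero, h2, hab, hh, hx0], ?_⟩
  field_simp at hx
  linear_combination hx

/-- zero is not a nonzero square -/
lemma not_nzsq_zero {c : k} (hc : c = 0) : ¬ ∃ x : k, x ≠ 0 ∧ c = x^2 := by
  rintro ⟨x, hx0, hx⟩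
  apply hx0
  have : x ^ 2 = 0 := by rw [← hx, hc]
  exact pow_eq_zero_iff (by norm_num) |>.mp this

/-- build an (m₁, m₂) pair from τ with G(τ²) not a nonzero square -/
lemma from_G {a b τ : k} (h2 : (2:k) ≠ 0) (hab : a - b ≠ 0) (hab' : a + b ≠ 0)
    (hG : ¬ ∃ x : k, x ≠ 0 ∧ ((1+a)*τ^2-(1-b))*((1+b)*τ^2-(1-a)) = x^2) :
    ∃ m₁ m₂ : k, (∃ x : k, m₁^2 - 1 = x^2) ∧ (¬ ∃ x : k, x ≠ 0 ∧ m₂^2-1 = x^2) ∧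
      (a+b)*m₁ = 2 + (a-b)*m₂ := by
  have ht1 : τ ≠ 1 := by rintro rfl; exact hG ⟨a+b, hab', by ring⟩
  have ht2 : τ ≠ -1 := by rintro rfl; exact hG ⟨a+b, hab', by ring⟩
  have h1t : (1:k) - τ ≠ 0 := sub_ne_zero_of_ne (Ne.symm ht1)
  have h1t' : (1:k) + τ ≠ 0 := fun h => ht2 (by linear_combination h)
  have h4 : (4:k) ≠ 0 := by
    intro h; apply h2; have h' : (2:k)*2 = 0 := by linear_combination h
    rcases mul_eq_zero.mp h' with h''|h'' <;> exact h''
  set h : k := (1+τ)/(1-τ) with hdef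
  have hid : ((a+b)*h^2-2*(2+a-b)*h+(a+b)) * ((a+b)*h^2-2*(2-a+b)*h+(a+b))
      = 16*(((1+a)*τ^2-(1-b))*((1+b)*τ^2-(1-a)))/(1-τ)^4 := by
    rw [hdef]; field_simp; ring
  apply mk_pair h2 hab (div_ne_zero h1t' h1t)
  rintro ⟨x, hx0, hx⟩
  rw [hid, div_eq_iff (pow_ne_zero 4 h1t)] at hx
  apply hG
  refine ⟨x*(1-τ)^2/4, div_ne_zero (mul_ne_zero hx0 (pow_ne_zero 2 h1t)) h4, ?_⟩
  field_simp
  linear_combination hx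
/-- forward k-side: from a nontrivial solution to the pair condition -/
lemma kmain_forward {a b d : k} (h2 : (2:k) ≠ 0) (hd : ¬ ∃ t : k, d = t ^ 2)
    (habne : b ^ 2 ≠ a ^ 2) {x₁ x₂ y₁ y₂ : k}
    (hnz : ¬ (x₁ = 0 ∧ x₂ = 0 ∧ y₁ = 0 ∧ y₂ = 0))
    (hK : (1+a)*x₁^2 + (1-a)*d*x₂^2 - (1-b)*y₁^2 - (1+b)*d*y₂^2 = 0)
    (hE : x₁*x₂ - y₁*y₂ = 0) :
    ∃ m₁ m₂ : k, (∃ x : k, m₁^2 - 1 = x^2) ∧ (¬ ∃ x : k, x ≠ 0 ∧ m₂^2-1 = x^2) ∧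
      (a+b)*m₁ = 2 + (a-b)*m₂ := by
  have hd0 : d ≠ 0 := fun h => hd ⟨0, by rw [h]; ring⟩
  have hab : a - b ≠ 0 := fun h => habne (by linear_combination (-(a+b))*h)
  have hab' : a + b ≠ 0 := fun h => habne (by linear_combination (b-a)*h)
  -- corner cases
  by_cases ha1 : a = 1
  · exact ⟨1, -1, ⟨0, by ring⟩, not_nzsq_zero (by ring), by rw [ha1]; ring⟩
  by_cases ha2 : a = -1
  · exact ⟨-1, 1, ⟨0, by ring⟩, not_nzsq_zero (by ring), by rw [ha2]; ring⟩
  by_cases hb1 : b = 1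
  · exact ⟨1, 1, ⟨0, by ring⟩, not_nzsq_zero (by ring), by rw [hb1]; ring⟩
  by_cases hb2 : b = -1
  · exact ⟨-1, -1, ⟨0, by ring⟩, not_nzsq_zero (by ring), by rw [hb2]; ring⟩
  have hA : (1:k) + a ≠ 0 := fun h => ha2 (by linear_combination h)
  have hA' : (1:k) - a ≠ 0 := fun h => ha1 (by linear_combination -h)
  have hB : (1:k) - b ≠ 0 := fun h => hb1 (by linear_combination -h)
  have hB' : (1:k) + b ≠ 0 := fun h => hb2 (by linear_combination h)
  by_cases hy₁ : y₁ ≠ 0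
  · -- main case
    set τ : k := x₁ / y₁ with hτ
    have hx₁ : x₁ = τ * y₁ := by rw [hτ]; field_simp
    have hy₂ : y₂ = τ * x₂ := by
      rw [hτ]; rw [div_mul_eq_mul_div, eq_div_iff hy₁]
      linear_combination -hE
    have key : y₁^2 * ((1+a)*τ^2-(1-b)) = d * x₂^2 * ((1+b)*τ^2-(1-a)) := by
      rw [hx₁] at hK
      rw [hy₂] at hK
      linear_combination hK
    apply from_G h2 hab hab'
    rintro ⟨x, hx0, hx⟩
    -- G = d * c² with c = x₂*((1+b)τ²-(1-a))/y₁
    have hGy : y₁^2 * (((1+a)*τ^2-(1-b)) * ((1+b)*τ^2-(1-a))) = d * (x₂*((1+b)*τ^2-(1-a)))^2 := by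
      linear_combination ((1+b)*τ^2-(1-a)) * key
    rw [hx] at hGy
    rcases eq_or_ne (x₂*((1+b)*τ^2-(1-a))) 0 with hc | hc
    · rw [hc] at hGy
      apply hx0
      have : (y₁ * x)^2 = 0 := by linear_combination hGy
      have := pow_eq_zero_iff (n := 2) (by norm_num) |>.mp this
      rcases mul_eq_zero.mp this with h'|h'
      · exact absurd h' hy₁
      · exact h'
    · apply hd
      refine ⟨y₁ * x / (x₂*((1+b)*τ^2-(1-a))), ?_⟩
      rw [div_pow, eq_div_iff (pow_ne_zero 2 hc)]
      linear_combination -hGy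
  · push_neg at hy₁
    subst hy₁
    have hE' : x₁ * x₂ = 0 := by linear_combination hE
    rcases mul_eq_zero.mp hE' with hx₁ | hx₂
    · -- x₁ = 0 : then (1-a)x₂² = (1+b)y₂², use τ = y₂/x₂, second factor of G vanishes
      subst hx₁
      have hx₂ : x₂ ≠ 0 := by
        intro h
        rcases eq_or_ne y₂ 0 with h' | h'
        · exact hnz ⟨rfl, h, rfl, h'⟩
        · apply h'
          rw [h] at hK
          have : ((1+b)*d) * y₂^2 = 0 := by linear_combination -hK
          rcases mul_eq_zero.mp this with h''|h''
          · exact absurd h'' (mul_ne_zero hB' hd0)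
          · exact pow_eq_zero_iff (n := 2) (by norm_num) |>.mp h''
      have key : (1+b)*(y₂/x₂)^2 - (1-a) = 0 := by
        have h' : d * ((1+b)*y₂^2 - (1-a)*x₂^2) = 0 := by linear_combination -hK
        rcases mul_eq_zero.mp h' with h''|h''
        · exact absurd h'' hd0
        · field_simp
          linear_combination h''
      apply from_G h2 hab hab'
      rintro ⟨x, hx0, hx⟩
      rw [key, mul_zero] at hx
      exact hx0 (pow_eq_zero_iff (n := 2) (by norm_num) |>.mp hx.symm)
    · -- x₂ = 0, so (1+a)x₁² = (1+b)d y₂², h = -1 case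
      subst hx₂
      have hx₁ : x₁ ≠ 0 := by
        intro h
        rcases eq_or_ne y₂ 0 with h' | h'
        · exact hnz ⟨h, rfl, rfl, h'⟩
        · apply h'
          rw [h] at hK
          have : ((1+b)*d) * y₂^2 = 0 := by linear_combination -hK
          rcases mul_eq_zero.mp this with h''|h''
          · exact absurd h'' (mul_ne_zero hB' hd0)
          · exact pow_eq_zero_iff (n := 2) (by norm_num) |>.mp h''
      have hy₂ : y₂ ≠ 0 := by
        intro h
        rw [h] at hK
        apply hx₁
        have : (1+a) * x₁^2 = 0 := by linear_combination hK
        rcases mul_eq_zero.mp this with h''|h''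
        · exact absurd h'' hA
        · exact pow_eq_zero_iff (n := 2) (by norm_num) |>.mp h''
      have key : (1+a)*(1+b) * x₁^2 = d * ((1+b)*y₂)^2 := by
        linear_combination (1+b) * hK
      have h4 : (4:k) ≠ 0 := by
        intro h; apply h2; have h' : (2:k)*2 = 0 := by linear_combination h
        rcases mul_eq_zero.mp h' with h''|h'' <;> exact h''
      apply mk_pair h2 hab (h := -1) (neg_ne_zero.mpr one_ne_zero)
      rintro ⟨x, hx0, hx⟩
      apply hd
      have h16 : ((a+b)*(-1:k)^2-2*(2+a-b)*(-1)+(a+b)) * ((a+b)*(-1:k)^2-2*(2-a+b)*(-1)+(a+b))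
          = 16 * ((1+a)*(1+b)) := by ring
      rw [h16] at hx
      -- 16 (1+a)(1+b) = x², and (1+a)(1+b) x₁² = d ((1+b) y₂)²
      refine ⟨x * x₁ / (4 * ((1+b)*y₂)), ?_⟩
      rw [div_pow, eq_div_iff (pow_ne_zero 2 (mul_ne_zero h4 (mul_ne_zero hB' hy₂)))]
      linear_combination x₁^2 * hx - (16:k) * key

end Kside

/-- backward k-side: from the pair condition to a nontrivial solution -/
lemma kmain_backward {a b d : k} (h2 : (2:k) ≠ 0) (hd : ¬ ∃ t : k, d = t ^ 2)
    (hmul : ∀ c c' : k, (¬ ∃ t : k, c = t^2) → (¬ ∃ t : k, c' = t^2) → ∃ t : k, c*c' = t^2)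
    (habne : b ^ 2 ≠ a ^ 2) {m₁ m₂ : k}
    (hm₁ : ∃ x : k, m₁^2 - 1 = x^2) (hm₂ : ¬ ∃ x : k, x ≠ 0 ∧ m₂^2-1 = x^2)
    (hrel : (a+b)*m₁ = 2 + (a-b)*m₂) :
    ∃ x₁ x₂ y₁ y₂ : k, ¬ (x₁ = 0 ∧ x₂ = 0 ∧ y₁ = 0 ∧ y₂ = 0) ∧
      (1+a)*x₁^2 + (1-a)*d*x₂^2 - (1-b)*y₁^2 - (1+b)*d*y₂^2 = 0 ∧ x₁*x₂ - y₁*y₂ = 0 := by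
  have hd0 : d ≠ 0 := fun h => hd ⟨0, by rw [h]; ring⟩
  have hab : a - b ≠ 0 := fun h => habne (by linear_combination (-(a+b))*h)
  have hab' : a + b ≠ 0 := fun h => habne (by linear_combination (b-a)*h)
  by_cases ha2 : a = -1
  · exact ⟨1, 0, 0, 0, fun hc => one_ne_zero hc.1, by rw [ha2]; ring, by ring⟩
  by_cases ha1 : a = 1
  · exact ⟨0, 1, 0, 0, fun hc => one_ne_zero hc.2.1, by rw [ha1]; ring, by ring⟩
  by_cases hb1 : b = 1
  · exact ⟨0, 0, 1, 0, fun hc => one_ne_zero hc.2.2.1, by rw [hb1]; ring, by ring⟩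
  by_cases hb2 : b = -1
  · exact ⟨0, 0, 0, 1, fun hc => one_ne_zero hc.2.2.2, by rw [hb2]; ring, by ring⟩
  have hA : (1:k) + a ≠ 0 := fun h => ha2 (by linear_combination h)
  have hA' : (1:k) - a ≠ 0 := fun h => ha1 (by linear_combination -h)
  have hB : (1:k) - b ≠ 0 := fun h => hb1 (by linear_combination -h)
  have hB' : (1:k) + b ≠ 0 := fun h => hb2 (by linear_combination h)
  have h4 : (4:k) ≠ 0 := by
    intro h; apply h2; have h' : (2:k)*2 = 0 := by linear_combination h
    rcases mul_eq_zero.mp h' with h''|h'' <;> exact h''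
  obtain ⟨r, hr⟩ := hm₁
  set h : k := m₁ + r with hdef
  have hone : h * (m₁ - r) = 1 := by rw [hdef]; linear_combination hr
  have hh : h ≠ 0 := left_ne_zero_of_mul_eq_one hone
  have hh1 : h^2 + 1 = 2*m₁*h := by rw [hdef]; linear_combination -hr
  clear_value h
  have hq : ¬ ∃ x : k, x ≠ 0 ∧
      ((a+b)*h^2-2*(2+a-b)*h+(a+b)) * ((a+b)*h^2-2*(2-a+b)*h+(a+b)) = x ^ 2 := by
    rintro ⟨x, hx0, hx⟩
    apply hm₂
    refine ⟨x/(2*(a-b)*h), div_ne_zero hx0 (mul_ne_zero (mul_ne_zero h2 hab) hh), ?_⟩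
    rw [div_pow, eq_div_iff (pow_ne_zero 2 (mul_ne_zero (mul_ne_zero h2 hab) hh))]
    linear_combination hx - ((a+b)*((a+b)*(h^2+1)-4*h + 2*h*(a-b)*m₂))*hh1
      - (2*h*((a+b)*(h^2+1)-4*h + 2*h*(a-b)*m₂))*hrel
  by_cases hH : h = -1
  · rw [hH] at hq
    have hABn : ¬ ∃ t : k, (1+a)*(1+b) = t ^ 2 := by
      rintro ⟨t, ht⟩
      have ht0 : t ≠ 0 := by
        intro h0; rw [h0] at ht
        rcases mul_eq_zero.mp (by linear_combination ht : (1+a)*(1+b) = 0) with h'|h'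
        · exact hA h'
        · exact hB' h'
      exact hq ⟨4*t, mul_ne_zero h4 ht0, by linear_combination (16:k)*ht⟩
    obtain ⟨s, hs⟩ := hmul d ((1+a)*(1+b)) hd hABn
    have hs0 : s ≠ 0 := by
      intro h0; rw [h0] at hs
      have : d * ((1+a)*(1+b)) = 0 := by linear_combination hs
      rcases mul_eq_zero.mp this with h'|h'
      · exact hd0 h'
      · rcases mul_eq_zero.mp h' with h''|h''
        · exact hA h''
        · exact hB' h''
    exact ⟨s, 0, 0, 1+a, fun hc => hs0 hc.1, by linear_combination (-(1:k)-a)*hs, by ring⟩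
  · have hh1' : h + 1 ≠ 0 := fun h0 => hH (by linear_combination h0)
    set τ : k := (h-1)/(h+1) with hτ
    have hid : ((1+a)*τ^2-(1-b))*((1+b)*τ^2-(1-a))
        = ((a+b)*h^2-2*(2+a-b)*h+(a+b)) * ((a+b)*h^2-2*(2-a+b)*h+(a+b)) / (h+1)^4 := by
      rw [hτ]; field_simp; ring
    have hGn : ¬ ∃ x : k, x ≠ 0 ∧ ((1+a)*τ^2-(1-b))*((1+b)*τ^2-(1-a)) = x^2 := by
      rintro ⟨x, hx0, hxe⟩
      rw [hid, div_eq_iff (pow_ne_zero 4 hh1')] at hxe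
      exact hq ⟨x*(h+1)^2, mul_ne_zero hx0 (pow_ne_zero 2 hh1'), by linear_combination hxe⟩
    clear_value τ
    rcases eq_or_ne ((1+a)*τ^2-(1-b)) 0 with hF1 | hF1
    · exact ⟨τ, 0, 1, 0, fun hc => one_ne_zero hc.2.2.1, by linear_combination hF1, by ring⟩
    rcases eq_or_ne ((1+b)*τ^2-(1-a)) 0 with hF2 | hF2
    · exact ⟨0, 1, 0, τ, fun hc => one_ne_zero hc.2.1, by linear_combination -d*hF2, by ring⟩
    · have hGsq : ¬ ∃ t : k, ((1+a)*τ^2-(1-b))*((1+b)*τ^2-(1-a)) = t^2 := by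
        rintro ⟨t, ht⟩
        have ht0 : t ≠ 0 := by
          intro h0; rw [h0] at ht
          rcases mul_eq_zero.mp (by linear_combination ht :
            ((1+a)*τ^2-(1-b))*((1+b)*τ^2-(1-a)) = 0) with h'|h'
          · exact hF1 h'
          · exact hF2 h'
        exact hGn ⟨t, ht0, ht⟩
      obtain ⟨s, hs⟩ := hmul d _ hd hGsq
      have hs0 : s ≠ 0 := by
        intro h0; rw [h0] at hs
        have : d * (((1+a)*τ^2-(1-b))*((1+b)*τ^2-(1-a))) = 0 := by linear_combination hs
        rcases mul_eq_zero.mp this with h'|h'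
        · exact hd0 h'
        · rcases mul_eq_zero.mp h' with h''|h''
          · exact hF1 h''
          · exact hF2 h''
      exact ⟨τ*s, (1+a)*τ^2-(1-b), s, τ*((1+a)*τ^2-(1-b)),
        fun hc => hs0 hc.2.2.1,
        by linear_combination (-((1+a)*τ^2-(1-b)))*hs, by ring⟩

/-- (ii) forward k-side -/
lemma kii_forward {a d : k} (hsq : ∃ c : k, 1 - a^2 = c^2) :
    ∃ x₁ x₂ y₁ y₂ : k, ¬ (x₁ = 0 ∧ x₂ = 0 ∧ y₁ = 0 ∧ y₂ = 0) ∧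
      (1+a)*x₁^2 + (1-a)*d*x₂^2 - (1-a)*y₁^2 - (1+a)*d*y₂^2 = 0 ∧ x₁*x₂ - y₁*y₂ = 0 := by
  by_cases ha2 : a = -1
  · exact ⟨1, 0, 0, 0, fun hc => one_ne_zero hc.1, by rw [ha2]; ring, by ring⟩
  · obtain ⟨c, hc⟩ := hsq
    have hA : (1:k) + a ≠ 0 := fun h => ha2 (by linear_combination h)
    exact ⟨c, 0, 1+a, 0, fun h => hA h.2.2.1, by linear_combination (-(1:k)-a)*hc, by ring⟩

/-- (ii) backward k-side -/
lemma kii_backward {a d : k} (h2 : (2:k) ≠ 0) (hd : ¬ ∃ t : k, d = t ^ 2)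
    (hnsq : ¬ ∃ c : k, 1 - a^2 = c^2) {x₁ x₂ y₁ y₂ : k}
    (hnz : ¬ (x₁ = 0 ∧ x₂ = 0 ∧ y₁ = 0 ∧ y₂ = 0))
    (hK : (1+a)*x₁^2 + (1-a)*d*x₂^2 - (1-a)*y₁^2 - (1+a)*d*y₂^2 = 0)
    (hE : x₁*x₂ - y₁*y₂ = 0) : False := by
  have hd0 : d ≠ 0 := fun h => hd ⟨0, by rw [h]; ring⟩
  have ha1 : a ≠ 1 := fun h => hnsq ⟨0, by rw [h]; ring⟩
  have ha2 : a ≠ -1 := fun h => hnsq ⟨0, by rw [h]; ring⟩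
  have hA : (1:k) + a ≠ 0 := fun h => ha2 (by linear_combination h)
  have hA' : (1:k) - a ≠ 0 := fun h => ha1 (by linear_combination -h)
  by_cases hy₁ : y₁ ≠ 0
  · set τ : k := x₁ / y₁ with hτ
    have hx₁ : x₁ = τ * y₁ := by rw [hτ]; field_simp
    have hy₂ : y₂ = τ * x₂ := by
      rw [hτ]; rw [div_mul_eq_mul_div, eq_div_iff hy₁]
      linear_combination -hE
    have key : ((1+a)*τ^2 - (1-a)) * (y₁^2 - d*x₂^2) = 0 := by
      rw [hx₁] at hK
      rw [hy₂] at hK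
      linear_combination hK
    rcases mul_eq_zero.mp key with h' | h'
    · apply hnsq
      refine ⟨(1+a)*τ, ?_⟩
      linear_combination (-(1:k)-a)*h'
    · rcases eq_or_ne x₂ 0 with hx2 | hx2
      · rw [hx2] at h'
        apply hy₁
        have : y₁ ^ 2 = 0 := by linear_combination h'
        exact pow_eq_zero_iff (n := 2) (by norm_num) |>.mp this
      · apply hd
        refine ⟨y₁ / x₂, ?_⟩
        rw [div_pow, eq_div_iff (pow_ne_zero 2 hx2)]
        linear_combination -h'
  · push_neg at hy₁
    subst hy₁
    have hE' : x₁ * x₂ = 0 := by linear_combination hE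
    rcases mul_eq_zero.mp hE' with hx₁ | hx₂
    · subst hx₁
      have hx₂ : x₂ ≠ 0 := by
        intro h
        rcases eq_or_ne y₂ 0 with h' | h'
        · exact hnz ⟨rfl, h, rfl, h'⟩
        · apply h'
          rw [h] at hK
          have : ((1+a)*d) * y₂^2 = 0 := by linear_combination -hK
          rcases mul_eq_zero.mp this with h''|h''
          · exact absurd h'' (mul_ne_zero hA hd0)
          · exact pow_eq_zero_iff (n := 2) (by norm_num) |>.mp h''
      have key : d * ((1-a)*x₂^2 - (1+a)*y₂^2) = 0 := by linear_combination hK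
      rcases mul_eq_zero.mp key with h' | h'
      · exact hd0 h'
      · apply hnsq
        refine ⟨(1+a)*y₂/x₂, ?_⟩
        rw [div_pow, eq_div_iff (pow_ne_zero 2 hx₂)]
        linear_combination ((1:k)+a)*h'
    · subst hx₂
      have hx₁ : x₁ ≠ 0 := by
        intro h
        rcases eq_or_ne y₂ 0 with h' | h'
        · exact hnz ⟨h, rfl, rfl, h'⟩
        · apply h'
          rw [h] at hK
          have : ((1+a)*d) * y₂^2 = 0 := by linear_combination -hK
          rcases mul_eq_zero.mp this with h''|h''
          · exact absurd h'' (mul_ne_zero hA hd0)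
          · exact pow_eq_zero_iff (n := 2) (by norm_num) |>.mp h''
      have hy₂ : y₂ ≠ 0 := by
        intro h
        rw [h] at hK
        apply hx₁
        have : (1+a) * x₁^2 = 0 := by linear_combination hK
        rcases mul_eq_zero.mp this with h''|h''
        · exact absurd h'' hA
        · exact pow_eq_zero_iff (n := 2) (by norm_num) |>.mp h''
      apply hd
      refine ⟨x₁ / y₂, ?_⟩
      rw [div_pow, eq_div_iff (pow_ne_zero 2 hy₂)]
      have : (1+a) * (x₁^2 - d*y₂^2) = 0 := by linear_combination hK
      rcases mul_eq_zero.mp this with h''|h''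
      · exact absurd h'' hA
      · linear_combination -h''

lemma two_ne_zero_l (hchar : (2:k) ≠ 0) : (2 : ℓ) ≠ 0 := by
  intro h
  apply hchar
  apply (algebraMap k ℓ).injective
  rw [map_ofNat, map_zero]; exact_mod_cast h

lemma not_adm_iff (hquad : finrank k ℓ = 2) (hchar : (2:k) ≠ 0) (σ : ℓ ≃ₐ[k] ℓ)
    (hσ : ∃ x : ℓ, σ x ≠ x) {e : ℓ} {d : k}
    (he : σ e = -e) (he0 : e ≠ 0) (hed : e^2 = algebraMap k ℓ d) (a b : k) :
    ¬ IsAdmissiblePair σ a b ↔ ∃ x₁ x₂ y₁ y₂ : k, ¬(x₁=0∧x₂=0∧y₁=0∧y₂=0) ∧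
      (1+a)*x₁^2+(1-a)*d*x₂^2-(1-b)*y₁^2-(1+b)*d*y₂^2 = 0 ∧ x₁*x₂-y₁*y₂ = 0 := by
  have h2l : (2 : ℓ) ≠ 0 := two_ne_zero_l hchar
  constructor
  · intro hnadm
    rw [IsAdmissiblePair] at hnadm
    push_neg at hnadm
    obtain ⟨x, y, hxy, hne⟩ := hnadm
    obtain ⟨x₁, x₂, hx⟩ := coords hquad hchar σ hσ he he0 x
    obtain ⟨y₁, y₂, hy⟩ := coords hquad hchar σ hσ he he0 y
    rw [hx, hy, hab_coords σ he hed] at hxy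
    obtain ⟨hK, hE⟩ := indep hquad σ he he0 h2l hxy
    refine ⟨x₁, x₂, y₁, y₂, ?_, hK, ?_⟩
    · rintro ⟨h1, h2, h3, h4⟩
      rw [h1, h2] at hx
      rw [h3, h4] at hy
      simp at hx hy
      exact hne hx hy
    · rcases mul_eq_zero.mp hE with h' | h'
      · exact absurd h' hchar
      · exact h'
  · rintro ⟨x₁, x₂, y₁, y₂, hnz, hK, hE⟩ hadm
    have hz : hab σ a b (algebraMap k ℓ x₁ + algebraMap k ℓ x₂ * e)
        (algebraMap k ℓ y₁ + algebraMap k ℓ y₂ * e) = 0 := by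
      rw [hab_coords σ he hed, hK, show 2*(x₁*x₂-y₁*y₂) = 0 by linear_combination 2*hE]
      simp
    obtain ⟨hx0, hy0⟩ := hadm _ _ hz
    obtain ⟨hx1, hx2⟩ := indep hquad σ he he0 h2l (by rw [← hx0])
    obtain ⟨hy1, hy2⟩ := indep hquad σ he he0 h2l (by rw [← hy0])
    exact hnz ⟨hx1, hx2, hy1, hy2⟩

theorem pair_admissibility_aux (hchar : (2 : k) ≠ 0)
    (hidx : ((powMonoidHom 2 : kˣ →* kˣ).range).index = 2)
    (hquad : finrank k ℓ = 2)
    (σ : ℓ ≃ₐ[k] ℓ) (hσ : ∃ x : ℓ, σ x ≠ x)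
    (hnorm : ∀ t : k, t ≠ 0 → ∃ x : ℓ, x * σ x = algebraMap k ℓ t)
    (a b : k) :
    (b = -a → ¬ IsAdmissiblePair σ a b) ∧
    (b = a → (IsAdmissiblePair σ a b ↔ ¬ ∃ x : k, 1 - a ^ 2 = x ^ 2)) ∧
    (b ^ 2 ≠ a ^ 2 →
      (IsAdmissiblePair σ a b ↔
        ∀ m₁ ∈ {m : k | ∃ x : k, m ^ 2 - 1 = x ^ 2},
        ∀ m₂ ∈ {m : k | ¬ ∃ x : k, x ≠ 0 ∧ m ^ 2 - 1 = x ^ 2},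
          (a + b) * m₁ ≠ 2 + (a - b) * m₂)) := by
  obtain ⟨e, d, he, he0, hed, hdn⟩ := exists_e hquad hchar σ hσ
  have niff := fun a b => not_adm_iff hquad hchar σ hσ he he0 hed a b
  refine ⟨?_, ?_, ?_⟩
  · intro hba hadm
    have hz : hab σ a b 1 1 = 0 := by
      rw [hab, hba, map_one, map_neg]
      ring
    exact one_ne_zero (hadm 1 1 hz).1
  · intro hba
    subst hba
    constructor
    · intro hadm hsq
      obtain ⟨x₁, x₂, y₁, y₂, hnz, hK, hE⟩ := kii_forward (d := d) hsq
      exact (niff b b).mpr ⟨x₁, x₂, y₁, y₂, hnz, hK, hE⟩ hadm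
    · intro hnsq
      by_contra hadm
      obtain ⟨x₁, x₂, y₁, y₂, hnz, hK, hE⟩ := (niff b b).mp hadm
      exact kii_backward hchar hdn hnsq hnz hK hE
  · intro habne
    constructor
    · intro hadm m₁ hm₁ m₂ hm₂ heq
      obtain ⟨x₁, x₂, y₁, y₂, hnz, hK, hE⟩ :=
        kmain_backward hchar hdn (fun c c' => nonsq_mul hidx) habne hm₁ hm₂ heq
      exact (niff a b).mpr ⟨x₁, x₂, y₁, y₂, hnz, hK, hE⟩ hadm
    · intro hC
      by_contra hadm
      obtain ⟨x₁, x₂, y₁, y₂, hnz, hK, hE⟩ := (niff a b).mp hadm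
      obtain ⟨m₁, m₂, h1, h2, h3⟩ := kmain_forward hchar hdn habne hnz hK hE
      exact hC m₁ h1 m₂ h2 h3

end AuxPA

/-- Let `k` be a field of characteristic ≠ 2 with `k*/(k*)²` of order 2, let
`ℓ/k` be a quadratic field extension with surjective norm map, and let
`M₁ = {m | m² − 1 ∈ k_sq}`, `M₂ = {m | m² − 1 ∉ k_sq*}`. Then for all `(a, b) ∈ k²`:
(i) if `b = −a` then `(a, b)` is not `ℓ`-admissible;
(ii) if `b = a` then `(a, b)` is `ℓ`-admissible iff `1 − a² ∉ k_sq`;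
(iii) if `b² ≠ a²`, then `(a, b)` is `ℓ`-admissible iff
`(a + b)·m₁ ≠ 2 + (a − b)·m₂` for all `(m₁, m₂) ∈ M₁ × M₂`. -/
theorem pair_admissibility [Field k] [Field ℓ] [Algebra k ℓ]
    (hchar : (2 : k) ≠ 0)
    (hidx : ((powMonoidHom 2 : kˣ →* kˣ).range).index = 2)
    (hquad : finrank k ℓ = 2)
    (σ : ℓ ≃ₐ[k] ℓ) (hσ : ∃ x : ℓ, σ x ≠ x)
    (hnorm : ∀ t : k, t ≠ 0 → ∃ x : ℓ, x * σ x = algebraMap k ℓ t)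
    (a b : k) :
    -- (i)
    (b = -a → ¬ IsAdmissiblePair σ a b) ∧
    -- (ii)
    (b = a → (IsAdmissiblePair σ a b ↔ ¬ ∃ x : k, 1 - a ^ 2 = x ^ 2)) ∧
    -- (iii)
    (b ^ 2 ≠ a ^ 2 →
      (IsAdmissiblePair σ a b ↔
        ∀ m₁ ∈ {m : k | ∃ x : k, m ^ 2 - 1 = x ^ 2},
        ∀ m₂ ∈ {m : k | ¬ ∃ x : k, x ≠ 0 ∧ m ^ 2 - 1 = x ^ 2},
          (a + b) * m₁ ≠ 2 + (a - b) * m₂)) := by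
  exact pair_admissibility_aux hchar hidx hquad σ hσ hnorm a b
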